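/- Suppose Q(z; κ) = 0 with z = x + iy in the open first quadrant (x > 0, y > 0) and y² > κ² > 0, and regard z as a function of w = κ² via the implicit relation w = z²/((1+z)e^{-z} - 1). Then the quantity 2 z̄ |1+z|² + w(z̄ + z̄²) + z|z|² + |z|⁴, which equals (|z|²|1+z|²/w)(dz/dw)^{-1}, has negative imaginary part and real part larger than y⁴ - w y² > 0; consequently Re(dz/dκ) > 0 and Im(dz/dκ) > 0. -/

import Mathlib

open Complex

set_option maxHeartbeats 1000000 in
/-- Transversal crossing: at a root of `Q` in the open first quadrant with
`y² > κ²`, the quantity `2 z̄|1+z|² + w(z̄ + z̄²) + z|z|² + |z|⁴` (which equals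
`(|z|²|1+z|²/w)(dz/dw)⁻¹`) has negative imaginary part and real part larger
than `y⁴ - w y² > 0`; consequently `Re(dz/dκ) > 0` and `Im(dz/dκ) > 0`. -/
theorem Q_transversal_crossing (κ x y : ℝ) (hκ : 0 < κ) (hx : 0 < x) (hy : 0 < y)
    (hyk : κ ^ 2 < y ^ 2)
    (z w : ℂ) (hz : z = (x : ℂ) + (y : ℂ) * Complex.I) (hw : w = (κ : ℂ) ^ 2)
    (hQ : Complex.exp z * (1 + z ^ 2 / (κ : ℂ) ^ 2) - (1 + z) = 0)
    (E : ℂ)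
    (hE : E = 2 * (starRingEnd ℂ) z * ((‖1 + z‖ : ℂ)) ^ 2
        + w * ((starRingEnd ℂ) z + ((starRingEnd ℂ) z) ^ 2)
        + z * ((‖z‖ : ℂ)) ^ 2 + ((‖z‖ : ℂ)) ^ 4) :
    E.im < 0 ∧ y ^ 4 - κ ^ 2 * y ^ 2 < E.re ∧ 0 < y ^ 4 - κ ^ 2 * y ^ 2 ∧
    ∀ (g : ℝ → ℂ) (g' : ℂ), HasDerivAt g g' κ → g κ = z →
      (∀ᶠ s in nhds κ,
        Complex.exp (g s) * (1 + (g s) ^ 2 / (s : ℂ) ^ 2) - (1 + g s) = 0) →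
      0 < g'.re ∧ 0 < g'.im := by
  have hκ0 : (κ:ℂ) ≠ 0 := by exact_mod_cast hκ.ne'
  have habsz : ((‖z‖ : ℂ)) ^ 2 = z * (starRingEnd ℂ) z := by
    rw [← Complex.ofReal_pow, Complex.sq_norm, Complex.mul_conj]
  have habs1z : ((‖1 + z‖ : ℂ)) ^ 2 = (1 + z) * (1 + (starRingEnd ℂ) z) := by
    rw [← Complex.ofReal_pow, Complex.sq_norm, ← Complex.mul_conj]
    simp [map_add]
  have habsz4 : ((‖z‖ : ℂ)) ^ 4 = (z * (starRingEnd ℂ) z) ^ 2 := by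
    rw [← habsz]; ring
  have hconj : (starRingEnd ℂ) z = (x : ℂ) - (y : ℂ) * Complex.I := by
    rw [hz]; simp [Complex.ext_iff]
  have hEeq : E = Complex.ofReal (2*x*((1+x)^2+y^2) + κ^2*(x+x^2-y^2) + x*(x^2+y^2) + (x^2+y^2)^2)
      + Complex.ofReal (y*(-2*((1+x)^2+y^2) - κ^2*(1+2*x) + (x^2+y^2))) * Complex.I := by
    rw [hE, hw, habs1z, habsz, habsz4, hconj, hz]
    simp only [Complex.ext_iff, Complex.add_re, Complex.add_im, Complex.mul_re, Complex.mul_im,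
      Complex.ofReal_re, Complex.ofReal_im, Complex.I_re, Complex.I_im, Complex.one_re,
      Complex.one_im, Complex.sub_re, Complex.sub_im, pow_two, Complex.re_ofNat,
      Complex.im_ofNat]
    constructor <;> ring
  have hEre : E.re = 2*x*((1+x)^2+y^2) + κ^2*(x+x^2-y^2) + x*(x^2+y^2) + (x^2+y^2)^2 := by
    rw [hEeq]
    simp only [Complex.add_re, Complex.mul_re, Complex.ofReal_re, Complex.ofReal_im,
      Complex.I_re, Complex.I_im]
    ring
  have hEim : E.im = y*(-2*((1+x)^2+y^2) - κ^2*(1+2*x) + (x^2+y^2)) := by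
    rw [hEeq]
    simp only [Complex.add_im, Complex.mul_im, Complex.ofReal_re, Complex.ofReal_im,
      Complex.I_re, Complex.I_im]
    ring
  have him_neg : E.im < 0 := by
    rw [hEim]
    nlinarith [mul_pos hy hx, mul_pos hy (mul_pos hx hx), mul_pos hy (mul_pos hκ hκ),
      mul_pos (mul_pos hy hx) (mul_pos hκ hκ), mul_pos hy (mul_pos hy hy)]
  have hre_gt : y ^ 4 - κ ^ 2 * y ^ 2 < E.re := by
    rw [hEre]
    nlinarith [mul_pos hx hy, sq_nonneg κ, mul_pos hx (mul_pos hx hx), mul_pos hx (mul_pos hy hy),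
      mul_pos (mul_pos hx hx) (mul_pos hy hy), mul_pos hx hx,
      mul_nonneg (mul_nonneg (sq_nonneg κ) hx.le) hx.le, mul_nonneg (sq_nonneg κ) hx.le]
  have hpos : 0 < y ^ 4 - κ ^ 2 * y ^ 2 := by nlinarith [mul_pos hy hy]
  have hre_pos : 0 < E.re := lt_trans hpos hre_gt
  refine ⟨him_neg, hre_gt, hpos, ?_⟩
  intro g g' hg hgz hev
  -- derivative of the implicit equation
  have hor : HasDerivAt (fun s : ℝ => (s : ℂ)) 1 κ := by
    exact (hasDerivAt_id κ).ofReal_comp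
  have h3 : HasDerivAt (fun s : ℝ => ((s : ℂ))^2) (2*(κ:ℂ)) κ := by
    have := hor.mul hor
    simp only [pow_two]
    exact this.congr_deriv (by ring)
  have h2 : HasDerivAt (fun s => (g s)^2) (2 * z * g') κ := by
    have := hg.mul hg
    simp only [pow_two]
    exact this.congr_deriv (by rw [hgz]; ring)
  have hdiv : HasDerivAt (fun s : ℝ => (g s)^2 / ((s:ℂ))^2)
      ((2 * z * g' * (κ:ℂ)^2 - z^2 * (2*(κ:ℂ))) / ((κ:ℂ)^2)^2) κ := by
    have := h2.div h3 (pow_ne_zero 2 hκ0); rw [hgz] at this; exact this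
  have hexp : HasDerivAt (fun s => Complex.exp (g s)) (Complex.exp z * g') κ := by
    simpa [hgz] using hg.cexp
  have hF : HasDerivAt (fun s : ℝ => Complex.exp (g s) * (1 + (g s) ^ 2 / (s : ℂ) ^ 2) - (1 + g s))
      (Complex.exp z * g' * (1 + z ^ 2 / (κ:ℂ) ^ 2)
        + Complex.exp z * ((2 * z * g' * (κ:ℂ)^2 - z^2 * (2*(κ:ℂ))) / ((κ:ℂ)^2)^2) - g') κ := by
    have h := ((hexp.mul ((hasDerivAt_const κ (1:ℂ)).add hdiv)).sub
      ((hasDerivAt_const κ (1:ℂ)).add hg))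
    exact h.congr_deriv (by simp only [Pi.add_apply, hgz]; ring)
  have hF0 : HasDerivAt (fun s : ℝ => Complex.exp (g s) * (1 + (g s) ^ 2 / (s : ℂ) ^ 2) - (1 + g s))
      0 κ :=
    (hasDerivAt_const κ (0:ℂ)).congr_of_eventuallyEq (hev.mono fun s hs => hs)
  have hD0 : Complex.exp z * g' * (1 + z ^ 2 / (κ:ℂ) ^ 2)
      + Complex.exp z * ((2 * z * g' * (κ:ℂ)^2 - z^2 * (2*(κ:ℂ))) / ((κ:ℂ)^2)^2) - g' = 0 :=
    hF.unique hF0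
  have hQ2 : Complex.exp z * ((κ:ℂ)^2 + z^2) = (1+z) * (κ:ℂ)^2 := by
    have h := hQ
    field_simp at h
    linear_combination h
  have hD0' : Complex.exp z * (g' * ((κ:ℂ)^2*((κ:ℂ)^2 + z^2)) + 2*z*g'*(κ:ℂ)^2 - 2*(κ:ℂ)*z^2)
      = g' * (κ:ℂ)^4 := by
    have h : Complex.exp z * (g' * ((κ:ℂ)^2*((κ:ℂ)^2 + z^2)) + 2*z*g'*(κ:ℂ)^2 - 2*(κ:ℂ)*z^2)
        * (κ:ℂ)^2 = g' * (κ:ℂ)^4 * (κ:ℂ)^2 := by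
      field_simp at hD0
      linear_combination (κ:ℂ)^3 * hD0
    exact mul_right_cancel₀ (pow_ne_zero 2 hκ0) h
  have hzne : z ≠ 0 := by
    rw [hz]
    intro h
    have := congrArg Complex.re h
    simp at this
    linarith
  have hg'eq : g' * ((κ:ℂ) * ((κ:ℂ)^2 + z^2 + 2 + 2*z)) = 2*z*(1+z) := by
    have hmain : (g' * ((κ:ℂ) * ((κ:ℂ)^2 + z^2 + 2 + 2*z)) - 2*z*(1+z)) * ((κ:ℂ)^3 * z) = 0 := by
      linear_combination ((κ:ℂ)^2 + z^2) * hD0'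
        - (g' * ((κ:ℂ)^2*((κ:ℂ)^2 + z^2)) + 2*z*g'*(κ:ℂ)^2 - 2*(κ:ℂ)*z^2) * hQ2
    rcases mul_eq_zero.mp hmain with h | h
    · exact sub_eq_zero.mp h
    · exact absurd h (mul_ne_zero (pow_ne_zero 3 hκ0) hzne)
  -- the key positivity relation
  have hED : E = (starRingEnd ℂ) z * (1 + (starRingEnd ℂ) z) * ((κ:ℂ)^2 + z^2 + 2 + 2*z) := by
    rw [hE, hw, habs1z, habsz, habsz4]
    have hzz : z * (starRingEnd ℂ) z = (starRingEnd ℂ) z * z := by ring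
    ring
  have hkey : E * ((κ:ℂ) * g') = ((2 * (‖z‖)^2 * (‖1+z‖)^2 : ℝ) : ℂ) := by
    push_cast
    rw [habsz, habs1z]
    calc E * ((κ:ℂ) * g')
        = (starRingEnd ℂ) z * (1 + (starRingEnd ℂ) z) * (g' * ((κ:ℂ) * ((κ:ℂ)^2 + z^2 + 2 + 2*z)))
          := by rw [hED]; ring
      _ = (starRingEnd ℂ) z * (1 + (starRingEnd ℂ) z) * (2*z*(1+z)) := by rw [hg'eq]
      _ = 2 * (z * (starRingEnd ℂ) z) * ((1+z) * (1 + (starRingEnd ℂ) z)) := by ring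
  have hcpos : 0 < 2 * (‖z‖)^2 * (‖1+z‖)^2 := by
    have h1 : ‖z‖ ≠ 0 := by simpa using hzne
    have h2 : ‖1+z‖ ≠ 0 := by
      simp only [ne_eq, norm_eq_zero]
      intro h
      have := congrArg Complex.re h
      rw [hz] at this
      simp at this
      linarith
    positivity
  have hre := congrArg Complex.re hkey
  have him := congrArg Complex.im hkey
  simp only [Complex.mul_re, Complex.mul_im, Complex.ofReal_re, Complex.ofReal_im,
    Complex.mul_re, Complex.mul_im] at hre him
  have hnorm : 0 ≤ E.re^2 + E.im^2 := by positivity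
  have hA : (E.re^2 + E.im^2) * (κ * g'.re)
      = (2 * (‖z‖)^2 * (‖1+z‖)^2) * E.re := by
    linear_combination E.re * hre + E.im * him
  have hB : (E.re^2 + E.im^2) * (κ * g'.im)
      = -((2 * (‖z‖)^2 * (‖1+z‖)^2) * E.im) := by
    linear_combination E.re * him - E.im * hre
  have hAre : 0 < κ * g'.re := by
    by_contra h
    push_neg at h
    have h1 : (E.re^2 + E.im^2) * (κ * g'.re) ≤ 0 := mul_nonpos_of_nonneg_of_nonpos hnorm h
    linarith [hA, mul_pos hcpos hre_pos]
  have hBim : 0 < κ * g'.im := by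
    by_contra h
    push_neg at h
    have h1 : (E.re^2 + E.im^2) * (κ * g'.im) ≤ 0 := mul_nonpos_of_nonneg_of_nonpos hnorm h
    have h2 := mul_pos hcpos (neg_pos.mpr him_neg)
    rw [mul_neg] at h2
    linarith [hB]
  constructor
  · rcases mul_pos_iff.mp hAre with ⟨_, h⟩ | ⟨h, _⟩
    · exact h
    · linarith
  · rcases mul_pos_iff.mp hBim with ⟨_, h⟩ | ⟨h, _⟩
    · exact h
    · linarith
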